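/- Let β > 2, U(x) = |x|^β/β on R^d and b = -∇U. Then for all x ≠ y in R^d, (x-y)·(b(x)-b(y)) ≤ -(|x|^{β-2}/(2(β-1))) |x-y|². In particular k(x) := -sup_{y≠x}(x-y)·(b(x)-b(y))/|x-y|² satisfies k(x) ≥ |x|^{β-2}/(2(β-1)) for all x. -/

import Mathlib

open MeasureTheory Real
open scoped RealInnerProductSpace

private lemma grad_aux {d : ℕ} (β : ℝ) (hβ : 2 < β) (x : EuclideanSpace ℝ (Fin d)) :
    HasGradientAt (fun y : EuclideanSpace ℝ (Fin d) => ‖y‖ ^ β / β)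
      ((‖x‖ ^ (β - 2)) • x) x := by
  have hβ0 : β ≠ 0 := by linarith
  have h1 : HasFDerivAt (fun y : EuclideanSpace ℝ (Fin d) => ‖y‖ ^ 2)
      (2 • (innerSL ℝ x)) x := (hasStrictFDerivAt_norm_sq x).hasFDerivAt
  have h2 : HasDerivAt (fun t : ℝ => t ^ (β / 2))
      ((β / 2) * (‖x‖ ^ 2) ^ (β / 2 - 1)) (‖x‖ ^ 2) :=
    Real.hasDerivAt_rpow_const (Or.inr (by linarith))
  have h3 : HasFDerivAt (fun y : EuclideanSpace ℝ (Fin d) => β⁻¹ * ((‖y‖ ^ 2) ^ (β / 2)))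
      (β⁻¹ • (((β / 2) * (‖x‖ ^ 2) ^ (β / 2 - 1)) • (2 • (innerSL ℝ x)))) x :=
    by have := (h2.comp_hasFDerivAt x h1).const_mul β⁻¹; exact this
  have hfun : (fun y : EuclideanSpace ℝ (Fin d) => ‖y‖ ^ β / β)
      = fun y => β⁻¹ * ((‖y‖ ^ 2) ^ (β / 2)) := by
    funext y
    rw [div_eq_inv_mul]
    congr 1
    rw [← Real.rpow_natCast ‖y‖ 2, ← Real.rpow_mul (norm_nonneg y)]
    congr 1
    push_cast
    ring
  have hs : ((‖x‖ ^ 2 : ℝ)) ^ (β / 2 - 1) = ‖x‖ ^ (β - 2) := by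
    rw [← Real.rpow_natCast ‖x‖ 2, ← Real.rpow_mul (norm_nonneg x)]
    congr 1
    push_cast
    ring
  rw [hasGradientAt_iff_hasFDerivAt, hfun]
  refine h3.congr_fderiv ?_
  ext v
  simp only [InnerProductSpace.toDual_apply_apply, ContinuousLinearMap.smul_apply, innerSL_apply_apply,
    smul_eq_mul, real_inner_smul_left, hs]
  field_simp
  ring

private lemma one_dim (β a e : ℝ) (hβ : 2 < β) (ha : 0 ≤ a) (he : 0 ≤ e) :
    a ^ (β - 2) * (a - e) ^ 2 / 2 ≤ (a ^ (β - 2) * a - e ^ (β - 2) * e) * (a - e) := by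
  have hP : 0 ≤ a ^ (β - 2) := Real.rpow_nonneg ha _
  have hQ : 0 ≤ e ^ (β - 2) := Real.rpow_nonneg he _
  rcases le_or_gt a e with h | h
  · have key : a ^ (β - 2) ≤ e ^ (β - 2) := Real.rpow_le_rpow ha h (by linarith)
    have h1 : 0 ≤ (e ^ (β - 2) - a ^ (β - 2)) * e * (e - a) :=
      mul_nonneg (mul_nonneg (sub_nonneg.2 key) he) (sub_nonneg.2 h)
    nlinarith [mul_nonneg hP (sq_nonneg (a - e))]
  · -- e < a, so a > 0
    have ha0 : 0 < a := lt_of_le_of_lt he h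
    set u : ℝ := e / a with hu
    have hu0 : 0 ≤ u := div_nonneg he ha0.le
    have hu1 : u ≤ 1 := by rw [div_le_one ha0]; exact h.le
    have heu : e = a * u := by rw [hu]; field_simp
    have hQu : e ^ (β - 2) = a ^ (β - 2) * u ^ (β - 2) := by
      rw [heu, Real.mul_rpow ha0.le hu0]
    have hv : u ^ (β - 2) * u = u ^ (β - 1) := by
      rw [show β - 1 = (β - 2) + 1 by ring, Real.rpow_add' hu0 (by intro hc; linarith), rpow_one]
    have key : u ^ (β - 1) ≤ u := by
      rcases eq_or_lt_of_le hu0 with h0 | h0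
      · rw [← h0, Real.zero_rpow (by intro hc; linarith)]
      · have h2 : u ^ (β - 1) ≤ u ^ (1 : ℝ) :=
          Real.rpow_le_rpow_of_exponent_ge h0 hu1 (by linarith)
        rwa [Real.rpow_one] at h2
    have base : (1 - u) ^ 2 / 2 ≤ (1 - u ^ (β - 1)) * (1 - u) := by
      nlinarith [mul_nonneg (by linarith : (0:ℝ) ≤ u - u ^ (β - 1)) (by linarith : (0:ℝ) ≤ 1 - u)]
    have hmul := mul_le_mul_of_nonneg_left base
      (show (0:ℝ) ≤ a ^ (β - 2) * a ^ 2 by positivity)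
    have hv2 : a ^ (β - 2) * a ^ 2 * (u ^ (β - 2) * u) = a ^ (β - 2) * a ^ 2 * u ^ (β - 1) := by
      rw [hv]
    rw [hQu, heu]
    nlinarith [hmul, hv2]

theorem stmt5 {d : ℕ} (β : ℝ) (hβ : 2 < β)
    (U : EuclideanSpace ℝ (Fin d) → ℝ)
    (hU : ∀ x, U x = ‖x‖ ^ β / β)
    (b : EuclideanSpace ℝ (Fin d) → EuclideanSpace ℝ (Fin d))
    (hb : ∀ x, b x = -gradient U x)
    (k : EuclideanSpace ℝ (Fin d) → ℝ)
    (hk : ∀ x, k x =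
      -sSup {r : ℝ | ∃ y : EuclideanSpace ℝ (Fin d), y ≠ x ∧
        r = ⟪x - y, b x - b y⟫ / ‖x - y‖ ^ 2}) :
    (∀ x y : EuclideanSpace ℝ (Fin d), x ≠ y →
      ⟪x - y, b x - b y⟫ ≤ -(‖x‖ ^ (β - 2) / (2 * (β - 1))) * ‖x - y‖ ^ 2) ∧
    (∀ x, ‖x‖ ^ (β - 2) / (2 * (β - 1)) ≤ k x) := by
  have hUeq : U = fun y => ‖y‖ ^ β / β := funext hU
  have hgrad : ∀ x : EuclideanSpace ℝ (Fin d), gradient U x = (‖x‖ ^ (β - 2)) • x := by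
    intro x
    rw [hUeq]
    exact (grad_aux β hβ x).gradient
  have hbval : ∀ x : EuclideanSpace ℝ (Fin d), b x = -((‖x‖ ^ (β - 2)) • x) := by
    intro x; rw [hb, hgrad]
  have key : ∀ x y : EuclideanSpace ℝ (Fin d), x ≠ y →
      ⟪x - y, b x - b y⟫ ≤ -(‖x‖ ^ (β - 2) / (2 * (β - 1))) * ‖x - y‖ ^ 2 := by
    intro x y _
    have hP : 0 ≤ ‖x‖ ^ (β - 2) := Real.rpow_nonneg (norm_nonneg x) _
    have hQ : 0 ≤ ‖y‖ ^ (β - 2) := Real.rpow_nonneg (norm_nonneg y) _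
    have hc0 : 0 ≤ ‖x‖ ^ (β - 2) / (2 * (β - 1)) := div_nonneg hP (by linarith)
    have hc : ‖x‖ ^ (β - 2) / (2 * (β - 1)) * (2 * (β - 1)) = ‖x‖ ^ (β - 2) :=
      div_mul_cancel₀ _ (ne_of_gt (by linarith : (0:ℝ) < 2 * (β - 1)))
    have h2c : 2 * (‖x‖ ^ (β - 2) / (2 * (β - 1))) ≤ ‖x‖ ^ (β - 2) := by
      nlinarith [mul_nonneg hc0 (by linarith : (0:ℝ) ≤ β - 2)]
    have hinner : ⟪x - y, b x - b y⟫
        = (‖x‖ ^ (β - 2) + ‖y‖ ^ (β - 2)) * ⟪x, y⟫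
          - ‖x‖ ^ (β - 2) * ‖x‖ ^ 2 - ‖y‖ ^ (β - 2) * ‖y‖ ^ 2 := by
      rw [hbval x, hbval y]
      have h1 : ⟪x, x⟫ = ‖x‖ ^ 2 := real_inner_self_eq_norm_sq x
      have h2 : ⟪y, y⟫ = ‖y‖ ^ 2 := real_inner_self_eq_norm_sq y
      have h3 : ⟪y, x⟫ = ⟪x, y⟫ := real_inner_comm x y
      simp only [inner_sub_left, inner_sub_right, inner_neg_right, real_inner_smul_right,
        h1, h2, h3]
      ring
    have hnorm : ‖x - y‖ ^ 2 = ‖x‖ ^ 2 - 2 * ⟪x, y⟫ + ‖y‖ ^ 2 := norm_sub_sq_real x y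
    have hae : ⟪x, y⟫ ≤ ‖x‖ * ‖y‖ := real_inner_le_norm x y
    have h1d := one_dim β ‖x‖ ‖y‖ hβ (norm_nonneg x) (norm_nonneg y)
    have hint1 : 0 ≤ (‖x‖ ^ (β - 2) + ‖y‖ ^ (β - 2) - 2 * (‖x‖ ^ (β - 2) / (2 * (β - 1))))
        * (‖x‖ * ‖y‖ - ⟪x, y⟫) :=
      mul_nonneg (by linarith) (by linarith)
    have hint3 : 0 ≤ (‖x‖ ^ (β - 2) / 2 - ‖x‖ ^ (β - 2) / (2 * (β - 1)))
        * (‖x‖ - ‖y‖) ^ 2 :=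
      mul_nonneg (by linarith) (sq_nonneg _)
    rw [hinner, hnorm]
    nlinarith [h1d, hint1, hint3]
  refine ⟨key, ?_⟩
  intro x
  rw [hk]
  by_cases hx : ∃ y : EuclideanSpace ℝ (Fin d), y ≠ x
  · obtain ⟨y, hy⟩ := hx
    have hne : (Set.Nonempty {r : ℝ | ∃ y : EuclideanSpace ℝ (Fin d), y ≠ x ∧
        r = ⟪x - y, b x - b y⟫ / ‖x - y‖ ^ 2}) :=
      ⟨⟪x - y, b x - b y⟫ / ‖x - y‖ ^ 2, y, hy, rfl⟩
    have hub : ∀ r ∈ {r : ℝ | ∃ y : EuclideanSpace ℝ (Fin d), y ≠ x ∧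
        r = ⟪x - y, b x - b y⟫ / ‖x - y‖ ^ 2},
        r ≤ -(‖x‖ ^ (β - 2) / (2 * (β - 1))) := by
      rintro r ⟨z, hz, rfl⟩
      have hxz : x - z ≠ 0 := sub_ne_zero.2 hz.symm
      have hn : 0 < ‖x - z‖ ^ 2 := pow_pos (norm_pos_iff.2 hxz) 2
      exact (div_le_iff₀ hn).mpr (key x z hz.symm)
    have hsup := csSup_le hne hub
    linarith
  · push_neg at hx
    have hx0 : x = 0 := (hx 0).symm
    have hS : {r : ℝ | ∃ y : EuclideanSpace ℝ (Fin d), y ≠ x ∧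
        r = ⟪x - y, b x - b y⟫ / ‖x - y‖ ^ 2} = ∅ := by
      ext r
      simp only [Set.mem_setOf_eq, Set.mem_empty_iff_false, iff_false, not_exists]
      intro z hz
      exact hz.1 (hx z)
    rw [hS, Real.sSup_empty, hx0]
    simp [Real.zero_rpow (show β - 2 ≠ 0 by intro hc; linarith)]
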